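/- Let n ≥ 1 be an integer, δ ∈ (0,1) with ln(1/δ) < n/4, and set ε = √(ln(1/δ)/n). Let σ be uniform on {0,1} and t* uniform on {1,…,N}, independent. Conditionally on (σ, t*), generate N independent datasets Z_1, …, Z_N ∈ {0,1}^n, where the entries of Z_{t*} are i.i.d. Bernoulli with P(label = σ) = 1/2 + ε and the entries of Z_t for t ≠ t* are i.i.d. Bernoulli(1/2). If N ≥ δ^{−8}, then for every function ψ : ({0,1}^n)^N → {0,1}, P(ψ(Z_1,…,Z_N) ≠ σ) ≥ (2 − √2)/4. -/

import Mathlib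

/-- Bernoulli weight: probability of label `b` when the probability of label
`true` is `p`. -/
noncomputable def bern (p : ℝ) (b : Bool) : ℝ := if b then p else 1 - p

/-- Likelihood of a dataset `z` of `n` i.i.d. Bernoulli(`p`) labels. -/
noncomputable def dsLik (n : ℕ) (p : ℝ) (z : Fin n → Bool) : ℝ := ∏ i, bern p (z i)

/-- Probability of label `1` for the biased source with `P(label = σ) = 1/2 + ε`. -/
noncomputable def biasedP (ε : ℝ) (σ : Bool) : ℝ := if σ then 1/2 + ε else 1/2 - ε

open Finset

lemma sum_pi {m : ℕ} {α : Type*} [Fintype α] [DecidableEq α] (h : Fin m → α → ℝ) :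
    ∑ z : Fin m → α, ∏ t, h t (z t) = ∏ t, ∑ w, h t w := by
  rw [Finset.prod_univ_sum (fun _ => (univ : Finset α)) h, Fintype.piFinset_univ]

lemma bern_sum (p : ℝ) : ∑ b : Bool, bern p b = 1 := by
  simp [bern]

lemma bern_mul_sum (a b : ℝ) : ∑ x : Bool, bern a x * bern b x = a*b + (1-a)*(1-b) := by
  simp [bern]

lemma dsLik_sum (n : ℕ) (p : ℝ) : ∑ w : Fin n → Bool, dsLik n p w = 1 := by
  unfold dsLik
  rw [sum_pi (fun _ b => bern p b)]
  simp [bern]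

lemma dsLik_mul_sum (n : ℕ) (a b : ℝ) :
    ∑ w : Fin n → Bool, dsLik n a w * dsLik n b w = (a*b + (1-a)*(1-b))^n := by
  unfold dsLik
  have : ∀ w : Fin n → Bool, (∏ i, bern a (w i)) * ∏ i, bern b (w i)
      = ∏ i, (bern a (w i) * bern b (w i)) := by
    intro w; rw [Finset.prod_mul_distrib]
  simp_rw [this]
  rw [sum_pi (fun _ x => bern a x * bern b x)]
  simp [bern]

lemma dsLik_half (n : ℕ) (w : Fin n → Bool) : dsLik n (1/2) w = (1/2)^n := by
  unfold dsLik bern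
  rw [Finset.prod_congr rfl (fun i _ => by norm_num : ∀ i ∈ univ, (if w i then (1:ℝ)/2 else 1 - 1/2) = 1/2)]
  simp

lemma split_eval {N : ℕ} {K : Type*} [Fintype K] [DecidableEq K]
    (F G : K → ℝ) (t t' : Fin N) (z : Fin N → K) :
    F (z t) * G (z t') = ∏ s, ((if s = t then F (z s) else 1) * (if s = t' then G (z s) else 1)) := by
  rw [Finset.prod_mul_distrib]
  congr 1
  · rw [Finset.prod_ite_eq' univ t (fun s => F (z s))]; simp
  · rw [Finset.prod_ite_eq' univ t' (fun s => G (z s))]; simp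

lemma pair_sum (n N : ℕ) (a b : ℝ) (t t' : Fin N) :
    ∑ z : Fin N → Fin n → Bool, dsLik n a (z t) * dsLik n b (z t')
      = if t = t' then (a*b + (1-a)*(1-b))^n * ((2:ℝ)^n)^(N-1)
        else ((2:ℝ)^n)^(N-2) := by
  simp_rw [split_eval (dsLik n a) (dsLik n b) t t']
  rw [sum_pi (fun s w => (if s = t then dsLik n a w else 1) * (if s = t' then dsLik n b w else 1))]
  have hcard : ∑ w : Fin n → Bool, (1:ℝ) = (2:ℝ)^n := by
    simp [Finset.card_univ]
  by_cases h : t = t'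
  · subst h
    rw [if_pos rfl]
    rw [← Finset.mul_prod_erase univ _ (mem_univ t)]
    have h1 : ∑ w : Fin n → Bool, (if t = t then dsLik n a w else 1) * (if t = t then dsLik n b w else 1)
        = (a*b + (1-a)*(1-b))^n := by
      simp only [if_pos rfl]; exact dsLik_mul_sum n a b
    rw [h1]
    congr 1
    rw [Finset.prod_congr rfl (fun s hs => ?_), Finset.prod_const, Finset.card_erase_of_mem (mem_univ t), Finset.card_univ, Fintype.card_fin]
    have hst : s ≠ t := Finset.ne_of_mem_erase hs
    simp [hst, hcard]
  · rw [if_neg h]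
    have ht'm : t' ∈ univ.erase t := Finset.mem_erase.2 ⟨Ne.symm h, mem_univ t'⟩
    rw [← Finset.mul_prod_erase univ _ (mem_univ t),
        ← Finset.mul_prod_erase (univ.erase t) _ ht'm]
    have h1 : (∑ w : Fin n → Bool, (if t = t then dsLik n a w else 1) * if t = t' then dsLik n b w else 1) = 1 := by
      simp [h, dsLik_sum]
    have h2 : (∑ w : Fin n → Bool, (if t' = t then dsLik n a w else 1) * if t' = t' then dsLik n b w else 1) = 1 := by
      simp [Ne.symm h, dsLik_sum]
    rw [h1, h2]
    have h3 : ∀ s ∈ (univ.erase t).erase t', (∑ w : Fin n → Bool, (if s = t then dsLik n a w else 1) * if s = t' then dsLik n b w else 1) = (2:ℝ)^n := by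
      intro s hs
      have hst' : s ≠ t' := Finset.ne_of_mem_erase hs
      have hst : s ≠ t := Finset.ne_of_mem_erase (Finset.mem_of_mem_erase hs)
      simp [hst, hst', Finset.card_univ]
    rw [Finset.prod_congr rfl h3, Finset.prod_const,
        Finset.card_erase_of_mem ht'm, Finset.card_erase_of_mem (mem_univ t),
        Finset.card_univ, Fintype.card_fin, Nat.sub_sub]
    norm_num

lemma single_sum (n N : ℕ) (a : ℝ) (t : Fin N) :
    ∑ z : Fin N → Fin n → Bool, dsLik n a (z t) = ((2:ℝ)^n)^(N-1) := by
  have key : ∀ z : Fin N → Fin n → Bool, dsLik n a (z t) = ∏ s, (if s = t then dsLik n a (z s) else 1) := by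
    intro z
    rw [Finset.prod_ite_eq' univ t (fun s => dsLik n a (z s))]
    simp
  simp_rw [key]
  rw [sum_pi (fun s w => if s = t then dsLik n a w else 1)]
  rw [← Finset.mul_prod_erase univ _ (mem_univ t)]
  have h1 : (∑ w : Fin n → Bool, if t = t then dsLik n a w else 1) = 1 := by simp [dsLik_sum]
  rw [h1, one_mul]
  have h3 : ∀ s ∈ univ.erase t, (∑ w : Fin n → Bool, if s = t then dsLik n a w else 1) = (2:ℝ)^n := by
    intro s hs
    simp [Finset.ne_of_mem_erase hs, Finset.card_univ]
  rw [Finset.prod_congr rfl h3, Finset.prod_const, Finset.card_erase_of_mem (mem_univ t), Finset.card_univ, Fintype.card_fin]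

lemma QQ (n N : ℕ) (a b : ℝ) :
    ∑ z : Fin N → Fin n → Bool, (∑ t, dsLik n a (z t)) * (∑ t', dsLik n b (z t'))
      = (N:ℝ) * ((a*b + (1-a)*(1-b))^n * ((2:ℝ)^n)^(N-1))
        + (N:ℝ) * ((N:ℝ) - 1) * ((2:ℝ)^n)^(N-2) := by
  have e1 : ∀ z : Fin N → Fin n → Bool,
      (∑ t, dsLik n a (z t)) * (∑ t', dsLik n b (z t'))
        = ∑ t, ∑ t', dsLik n a (z t) * dsLik n b (z t') := by
    intro z; rw [Finset.sum_mul_sum]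
  simp_rw [e1]
  rw [Finset.sum_comm]
  have e2 : ∀ t : Fin N,
      (∑ z : Fin N → Fin n → Bool, ∑ t' : Fin N, dsLik n a (z t) * dsLik n b (z t'))
        = ∑ t' : Fin N, ∑ z : Fin N → Fin n → Bool, dsLik n a (z t) * dsLik n b (z t') := by
    intro t; rw [Finset.sum_comm]
  simp_rw [e2, pair_sum n N a b]
  have e3 : ∀ t : Fin N,
      (∑ t' : Fin N, if t = t' then (a*b + (1-a)*(1-b))^n * ((2:ℝ)^n)^(N-1) else ((2:ℝ)^n)^(N-2))
        = (a*b + (1-a)*(1-b))^n * ((2:ℝ)^n)^(N-1) + ((N:ℝ) - 1) * ((2:ℝ)^n)^(N-2) := by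
    intro t
    rw [← Finset.add_sum_erase univ _ (Finset.mem_univ t), if_pos rfl]
    have h3 : ∀ t' ∈ univ.erase t,
        (if t = t' then (a*b + (1-a)*(1-b))^n * ((2:ℝ)^n)^(N-1) else ((2:ℝ)^n)^(N-2))
          = ((2:ℝ)^n)^(N-2) := by
      intro t' ht'
      rw [if_neg (fun hh => Finset.ne_of_mem_erase ht' hh.symm)]
    rw [Finset.sum_congr rfl h3, Finset.sum_const, Finset.card_erase_of_mem (Finset.mem_univ t),
        Finset.card_univ, Fintype.card_fin, nsmul_eq_mul, Nat.cast_sub t.pos]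
    push_cast
    ring
  simp_rw [e3]
  rw [Finset.sum_const, Finset.card_univ, Fintype.card_fin, nsmul_eq_mul]
  ring

lemma diff_sq_sum (n N : ℕ) (ε : ℝ) :
    ∑ z : Fin N → Fin n → Bool,
      ((∑ t, dsLik n (1/2 - ε) (z t)) - (∑ t, dsLik n (1/2 + ε) (z t)))^2
    = (N:ℝ) * ((2:ℝ)^n)^(N-1) * (2 * ((1/2 + 2*ε^2)^n - (1/2 - 2*ε^2)^n)) := by
  have expand : ∀ z : Fin N → Fin n → Bool,
      ((∑ t, dsLik n (1/2 - ε) (z t)) - (∑ t, dsLik n (1/2 + ε) (z t)))^2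
      = (∑ t, dsLik n (1/2 - ε) (z t)) * (∑ t', dsLik n (1/2 - ε) (z t'))
        - 2 * ((∑ t, dsLik n (1/2 - ε) (z t)) * (∑ t', dsLik n (1/2 + ε) (z t')))
        + (∑ t, dsLik n (1/2 + ε) (z t)) * (∑ t', dsLik n (1/2 + ε) (z t')) := by
    intro z; ring
  simp_rw [expand]
  rw [Finset.sum_add_distrib, Finset.sum_sub_distrib, ← Finset.mul_sum]
  rw [QQ n N (1/2 - ε) (1/2 - ε), QQ n N (1/2 - ε) (1/2 + ε), QQ n N (1/2 + ε) (1/2 + ε)]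
  have c1 : (1/2 - ε) * (1/2 - ε) + (1 - (1/2 - ε)) * (1 - (1/2 - ε)) = 1/2 + 2*ε^2 := by ring
  have c2 : (1/2 - ε) * (1/2 + ε) + (1 - (1/2 - ε)) * (1 - (1/2 + ε)) = 1/2 - 2*ε^2 := by ring
  have c3 : (1/2 + ε) * (1/2 + ε) + (1 - (1/2 + ε)) * (1 - (1/2 + ε)) = 1/2 + 2*ε^2 := by ring
  rw [c1, c2, c3]
  ring

lemma sqrt_bound {x : ℝ} (hx : 0 ≤ x) (h : x^2 ≤ 1/8) : x ≤ Real.sqrt 2 / 4 := by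
  nlinarith [Real.sq_sqrt (show (0:ℝ) ≤ 2 by norm_num), Real.sqrt_nonneg 2]

/-- Theorem 4.2 of the paper: adaptivity is impossible in the
agnostic case.  With `σ` uniform on `{0,1}`, `t*` uniform on `{1,…,N}`, dataset
`Z_{t*}` of `n` i.i.d. labels with `P(label = σ) = 1/2 + ε` and the other `N−1`
datasets i.i.d. Bernoulli(1/2), if `N ≥ δ^{−8}` then every estimator `ψ` of `σ`
from the pooled data errs with probability at least `(2−√2)/4`. -/
theorem stmt6 (n N : ℕ) (hn : 1 ≤ n) (δ : ℝ) (hδ0 : 0 < δ) (hδ1 : δ < 1)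
    (hlog : Real.log (1/δ) < (n : ℝ)/4)
    (ε : ℝ) (hε : ε = Real.sqrt (Real.log (1/δ) / n))
    (hN : δ ^ (-(8:ℝ)) ≤ (N:ℝ))
    (ψ : (Fin N → Fin n → Bool) → Bool) :
    (2 - Real.sqrt 2) / 4 ≤
      (1/2) * ∑ σ : Bool, (1/(N:ℝ)) * ∑ tstar : Fin N,
        ∑ z : Fin N → Fin n → Bool,
          (dsLik n (biasedP ε σ) (z tstar) *
              ∏ t ∈ Finset.univ.erase tstar, dsLik n (1/2) (z t)) *
            (if ψ z = σ then 0 else 1) := by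
  classical
  have hδ1' : (1:ℝ) ≤ 1/δ := by rw [le_div_iff₀ hδ0]; linarith
  have hlog0 : 0 ≤ Real.log (1/δ) := Real.log_nonneg hδ1'
  have hn0 : (0:ℝ) < n := by exact_mod_cast hn
  have hε2 : ε^2 = Real.log (1/δ) / n := by
    rw [hε, Real.sq_sqrt (div_nonneg hlog0 hn0.le)]
  have hε2le : 4 * ε^2 ≤ 1 := by
    have h4 : Real.log (1/δ) / n ≤ 1/4 := by
      rw [div_le_div_iff₀ hn0 (by norm_num : (0:ℝ) < 4)]
      linarith
    rw [hε2]; linarith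
  have h1N : (1:ℝ) ≤ N :=
    le_trans (Real.one_le_rpow_of_pos_of_le_one_of_nonpos hδ0 hδ1.le (by norm_num)) hN
  have hN0 : (0:ℝ) < N := by linarith
  have hNnat : 0 < N := by exact_mod_cast hN0
  have hNne : (N:ℝ) ≠ 0 := ne_of_gt hN0
  set γ : ℝ := ((2:ℝ)^n)^(N-1) with hγdef
  set γ' : ℝ := (((1:ℝ)/2)^n)^(N-1) with hγ'def
  have hγpos : 0 < γ := by positivity
  have hγ'pos : 0 < γ' := by positivity
  have hγγ' : γ' * γ = 1 := by
    rw [hγdef, hγ'def, ← mul_pow, ← mul_pow]; norm_num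
  -- structural rewrite of the error probability
  have key : ∀ σ : Bool,
      (∑ tstar : Fin N, ∑ z : Fin N → Fin n → Bool,
        (dsLik n (biasedP ε σ) (z tstar) * ∏ t ∈ Finset.univ.erase tstar, dsLik n (1/2) (z t)) *
          (if ψ z = σ then 0 else 1))
      = γ' * ∑ z : Fin N → Fin n → Bool,
          (∑ t, dsLik n (biasedP ε σ) (z t)) * (if ψ z = σ then 0 else 1) := by
    intro σ
    rw [Finset.sum_comm, Finset.mul_sum]
    refine Finset.sum_congr rfl (fun z _ => ?_)
    have hprod : ∀ tstar : Fin N,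
        ∏ t ∈ Finset.univ.erase tstar, dsLik n (1/2) (z t) = γ' := by
      intro tstar
      rw [Finset.prod_congr rfl (fun t _ => dsLik_half n (z t)), Finset.prod_const,
          Finset.card_erase_of_mem (Finset.mem_univ tstar), Finset.card_univ, Fintype.card_fin]
    simp_rw [hprod]
    rw [← Finset.sum_mul, ← Finset.sum_mul]
    ring
  rw [Fintype.sum_bool, key true, key false]
  set Sf : (Fin N → Fin n → Bool) → ℝ := fun z => ∑ t, dsLik n (biasedP ε false) (z t) with hSfdef
  set St : (Fin N → Fin n → Bool) → ℝ := fun z => ∑ t, dsLik n (biasedP ε true) (z t) with hStdef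
  set B : ℝ := ∑ z : Fin N → Fin n → Bool, |Sf z - St z| with hBdef
  have hB0 : 0 ≤ B := Finset.sum_nonneg fun z _ => abs_nonneg _
  -- marginal sums
  have hmarg : ∀ p : ℝ, (∑ z : Fin N → Fin n → Bool, ∑ t, dsLik n p (z t)) = (N:ℝ) * γ := by
    intro p
    rw [Finset.sum_comm, Finset.sum_congr rfl (fun t _ => single_sum n N p t),
        Finset.sum_const, Finset.card_univ, Fintype.card_fin, nsmul_eq_mul]
  have hSfsum : (∑ z : Fin N → Fin n → Bool, Sf z) = (N:ℝ) * γ := hmarg _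
  have hStsum : (∑ z : Fin N → Fin n → Bool, St z) = (N:ℝ) * γ := hmarg _
  -- pointwise min bound
  have hsum : (N:ℝ)*γ - B/2 ≤
      (∑ z : Fin N → Fin n → Bool, St z * (if ψ z = true then (0:ℝ) else 1))
      + ∑ z : Fin N → Fin n → Bool, Sf z * (if ψ z = false then (0:ℝ) else 1) := by
    rw [← Finset.sum_add_distrib]
    have lhs_eq : (N:ℝ)*γ - B/2
        = ∑ z : Fin N → Fin n → Bool, ((Sf z + St z)/2 - |Sf z - St z|/2) := by
      rw [Finset.sum_sub_distrib, ← Finset.sum_div, ← Finset.sum_div,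
          Finset.sum_add_distrib, hSfsum, hStsum, ← hBdef]
      ring
    rw [lhs_eq]
    apply Finset.sum_le_sum
    intro z _
    cases hψ : ψ z with
    | false =>
      simp only [hψ, if_pos, if_neg, Bool.false_eq_true, if_false, mul_one, mul_zero, add_zero]
      linarith [le_abs_self (Sf z - St z)]
    | true =>
      simp only [hψ, if_pos, if_neg, Bool.true_eq_false, if_false, mul_one, mul_zero, zero_add]
      linarith [neg_abs_le (Sf z - St z)]
  -- Cauchy–Schwarz
  have hcard : (Fintype.card (Fin N → Fin n → Bool) : ℝ) = ((2:ℝ)^n)^N := by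
    rw [Fintype.card_fun, Fintype.card_fun, Fintype.card_bool, Fintype.card_fin, Fintype.card_fin]
    push_cast; ring
  have hCS : B^2 ≤ ((2:ℝ)^n)^N * ∑ z : Fin N → Fin n → Bool, (Sf z - St z)^2 := by
    have h := Finset.sum_mul_sq_le_sq_mul_sq Finset.univ (fun _ => (1:ℝ))
      (fun z => |Sf z - St z|)
    simp only [one_pow, one_mul, sq_abs, Finset.sum_const, Finset.card_univ,
      nsmul_eq_mul, mul_one] at h
    rw [hcard] at h
    exact h
  have hbf : biasedP ε false = 1/2 - ε := rfl
  have hbt : biasedP ε true = 1/2 + ε := rfl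
  have hD : (∑ z : Fin N → Fin n → Bool, (Sf z - St z)^2)
      = (N:ℝ) * γ * (2 * ((1/2 + 2*ε^2)^n - (1/2 - 2*ε^2)^n)) := by
    rw [hSfdef, hStdef]
    simp only [hbf, hbt]
    exact diff_sq_sum n N ε
  -- power bookkeeping
  have hpowN : ((2:ℝ)^n)^N = γ * 2^n := by
    conv_lhs => rw [← Nat.succ_pred_eq_of_pos hNnat]
    rw [pow_succ, hγdef]
    rfl
  have hmul1 : (2:ℝ)^n * (1/2 + 2*ε^2)^n = (1 + 4*ε^2)^n := by
    rw [← mul_pow]; congr 1; ring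
  have hmul2 : (2:ℝ)^n * (1/2 - 2*ε^2)^n = (1 - 4*ε^2)^n := by
    rw [← mul_pow]; congr 1; ring
  have hup : (1 + 4*ε^2)^n ≤ (1/δ)^4 := by
    calc (1 + 4*ε^2)^n ≤ (Real.exp (4*ε^2))^n := by
          apply pow_le_pow_left₀ (by positivity)
          linarith [Real.add_one_le_exp (4*ε^2)]
      _ = Real.exp ((n:ℝ) * (4*ε^2)) := by rw [Real.exp_nat_mul]
      _ = Real.exp ((4:ℕ) * Real.log (1/δ)) := by
          congr 1
          rw [hε2]
          field_simp
          push_cast; ring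
      _ = (Real.exp (Real.log (1/δ)))^(4:ℕ) := by rw [Real.exp_nat_mul]
      _ = (1/δ)^4 := by rw [Real.exp_log (by positivity)]
  have hlow : 0 ≤ (1 - 4*ε^2)^n := pow_nonneg (by linarith) n
  have hinvN : (N:ℝ)⁻¹ ≤ δ^8 := by
    have h8 : δ ^ (-(8:ℝ)) = (δ^(8:ℕ))⁻¹ := by
      rw [Real.rpow_neg hδ0.le, ← Real.rpow_natCast δ 8]
      norm_num
    rw [h8] at hN
    have := inv_anti₀ (by positivity : (0:ℝ) < (δ^(8:ℕ))⁻¹) hN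
    rwa [inv_inv] at this
  -- the quantitative bound B·γ'/(4N) ≤ √2/4
  have hBsq : B^2 ≤ (N:ℝ) * γ^2 * (2^n * (2 * ((1/2 + 2*ε^2)^n - (1/2 - 2*ε^2)^n))) := by
    calc B^2 ≤ ((2:ℝ)^n)^N * ((N:ℝ) * γ * (2 * ((1/2 + 2*ε^2)^n - (1/2 - 2*ε^2)^n))) := by
          rw [← hD]; exact hCS
      _ = (N:ℝ) * γ^2 * (2^n * (2 * ((1/2 + 2*ε^2)^n - (1/2 - 2*ε^2)^n))) := by
          rw [hpowN]; ring
  have hDelta : 2^n * (2 * ((1/2 + 2*ε^2)^n - (1/2 - 2*ε^2)^n)) ≤ 2 * (1/δ)^4 := by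
    have : 2^n * (2 * ((1/2 + 2*ε^2)^n - (1/2 - 2*ε^2)^n))
        = 2 * ((1 + 4*ε^2)^n - (1 - 4*ε^2)^n) := by
      rw [← hmul1, ← hmul2]; ring
    rw [this]
    linarith
  have hBsq2 : B^2 ≤ (N:ℝ) * γ^2 * (2 * (1/δ)^4) := by
    calc B^2 ≤ (N:ℝ) * γ^2 * (2^n * (2 * ((1/2 + 2*ε^2)^n - (1/2 - 2*ε^2)^n))) := hBsq
      _ ≤ (N:ℝ) * γ^2 * (2 * (1/δ)^4) := by
          apply mul_le_mul_of_nonneg_left hDelta (by positivity)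
  have hEsq : (γ' * B / (4*N))^2 ≤ 1/8 := by
    have e1 : (γ' * B / (4*N))^2 = γ'^2 * B^2 / (16 * N^2) := by ring
    have e2 : γ'^2 * B^2 / (16 * N^2) ≤ γ'^2 * ((N:ℝ) * γ^2 * (2 * (1/δ)^4)) / (16 * N^2) := by
      gcongr
    have e3 : γ'^2 * ((N:ℝ) * γ^2 * (2 * (1/δ)^4)) / (16 * N^2)
        = (γ' * γ)^2 * ((1/δ)^4 / 8) * (N:ℝ)⁻¹ := by
      field_simp
      ring
    have e4 : (γ' * γ)^2 * ((1/δ)^4 / 8) * (N:ℝ)⁻¹ ≤ (1/δ)^4 / 8 * δ^8 := by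
      rw [hγγ', one_pow, one_mul]
      apply mul_le_mul_of_nonneg_left hinvN (by positivity)
    have e5 : (1/δ)^4 / 8 * δ^8 = δ^4 / 8 := by
      field_simp
    have e6 : δ^4 / 8 ≤ 1/8 := by
      have : δ^4 ≤ 1 := pow_le_one₀ hδ0.le hδ1.le
      linarith
    calc (γ' * B / (4*N))^2 = γ'^2 * B^2 / (16 * N^2) := e1
      _ ≤ γ'^2 * ((N:ℝ) * γ^2 * (2 * (1/δ)^4)) / (16 * N^2) := e2
      _ = (γ' * γ)^2 * ((1/δ)^4 / 8) * (N:ℝ)⁻¹ := e3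
      _ ≤ (1/δ)^4 / 8 * δ^8 := e4
      _ = δ^4 / 8 := e5
      _ ≤ 1/8 := e6
  have hE0 : 0 ≤ γ' * B / (4*N) := by positivity
  have hE : γ' * B / (4*N) ≤ Real.sqrt 2 / 4 := sqrt_bound hE0 hEsq
  -- final assembly
  have step1 : 1/2 - γ' * B / (4*N) ≤
      1/2 * ((1/(N:ℝ)) * (γ' * ∑ z : Fin N → Fin n → Bool, St z * (if ψ z = true then (0:ℝ) else 1))
        + (1/(N:ℝ)) * (γ' * ∑ z : Fin N → Fin n → Bool, Sf z * (if ψ z = false then (0:ℝ) else 1))) := by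
    have h := hsum
    have h2 : (γ'/(2*N)) * ((N:ℝ)*γ - B/2) ≤ (γ'/(2*N)) *
        ((∑ z : Fin N → Fin n → Bool, St z * (if ψ z = true then (0:ℝ) else 1))
         + ∑ z : Fin N → Fin n → Bool, Sf z * (if ψ z = false then (0:ℝ) else 1)) :=
      mul_le_mul_of_nonneg_left h (by positivity)
    have hhalf : (N:ℝ) * (2*(N:ℝ))⁻¹ = 1/2 := by
      field_simp
    have h3 : (γ'/(2*N)) * ((N:ℝ)*γ - B/2) = 1/2 - γ' * B / (4*N) := by
      calc (γ'/(2*N)) * ((N:ℝ)*γ - B/2)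
          = (γ'*γ) * ((N:ℝ) * (2*(N:ℝ))⁻¹) - γ' * B / (4*N) := by ring
        _ = 1/2 - γ' * B / (4*N) := by rw [hγγ', hhalf, one_mul]
    calc 1/2 - γ' * B / (4*N) = (γ'/(2*N)) * ((N:ℝ)*γ - B/2) := h3.symm
      _ ≤ _ := h2
      _ = _ := by ring
  have hfinal : (2 - Real.sqrt 2)/4 = 1/2 - Real.sqrt 2 / 4 := by ring
  calc (2 - Real.sqrt 2)/4 = 1/2 - Real.sqrt 2/4 := hfinal
    _ ≤ 1/2 - γ' * B / (4*N) := sub_le_sub_left hE (1/2)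
    _ ≤ _ := step1
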